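/- Base case of the excessive gap inequality: with p* = argmin_{p∈Δ_n} d(p), μ₀ = 2λ, α₀ = p*, and p₀ = p_{μ₀}(α₀), one has L_{μ₀}(α₀) ≤ −(1/2) p₀ᵀG p₀, where λ satisfies pᵀGp ≤ λ‖p‖_#² for the norm ‖·‖_# with respect to which d is 1-strongly convex. -/
import Mathlib


open Matrix

theorem stmt18 (n : ℕ) (G : Matrix (Fin n) (Fin n) ℝ) (hG : G.PosSemidef)
    (N : (Fin n → ℝ) → ℝ) (lam : ℝ) (hlam : 0 ≤ lam)
    (hquad : ∀ p : Fin n → ℝ, p ⬝ᵥ G.mulVec p ≤ lam * N p ^ 2)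
    (d : (Fin n → ℝ) → ℝ)
    (pstar : Fin n → ℝ) (hpstar : pstar ∈ stdSimplex ℝ (Fin n))
    (hd : ∀ p ∈ stdSimplex ℝ (Fin n), (1 / 2) * N (p - pstar) ^ 2 ≤ d p)
    (p0 : Fin n → ℝ) (hp0 : p0 ∈ stdSimplex ℝ (Fin n))
    (hp0min : ∀ p ∈ stdSimplex ℝ (Fin n),
      p0 ⬝ᵥ G.mulVec pstar + (2 * lam) * d p0 ≤ p ⬝ᵥ G.mulVec pstar + (2 * lam) * d p) :
    (⨆ p : stdSimplex ℝ (Fin n),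
        (-((p : Fin n → ℝ) ⬝ᵥ G.mulVec pstar) - (2 * lam) * d (p : Fin n → ℝ)))
      + (1 / 2) * (pstar ⬝ᵥ G.mulVec pstar)
      ≤ -(1 / 2) * (p0 ⬝ᵥ G.mulVec p0) := by
  have hne : Nonempty (stdSimplex ℝ (Fin n)) := ⟨⟨pstar, hpstar⟩⟩
  have hsup : (⨆ p : stdSimplex ℝ (Fin n),
      (-((p : Fin n → ℝ) ⬝ᵥ G.mulVec pstar) - (2 * lam) * d (p : Fin n → ℝ)))
      ≤ -(p0 ⬝ᵥ G.mulVec pstar) - (2 * lam) * d p0 := by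
    apply ciSup_le
    intro p
    have := hp0min p p.2
    linarith
  -- symmetry
  have hsym : pstar ⬝ᵥ G.mulVec p0 = p0 ⬝ᵥ G.mulVec pstar := by
    rw [dotProduct_mulVec, ← mulVec_transpose]
    have : Gᵀ = G := hG.isHermitian.eq
    rw [this, dotProduct_comm]
  have hq := hquad (p0 - pstar)
  have hexp : (p0 - pstar) ⬝ᵥ G.mulVec (p0 - pstar)
      = p0 ⬝ᵥ G.mulVec p0 - 2 * (p0 ⬝ᵥ G.mulVec pstar) + pstar ⬝ᵥ G.mulVec pstar := by
    simp only [mulVec_sub, dotProduct_sub, sub_dotProduct, hsym]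
    ring
  have hN : (1 / 2) * N (p0 - pstar) ^ 2 ≤ d p0 := hd p0 hp0
  have hNnn : 0 ≤ N (p0 - pstar) ^ 2 := sq_nonneg _
  have hkey : p0 ⬝ᵥ G.mulVec p0 - 2 * (p0 ⬝ᵥ G.mulVec pstar) + pstar ⬝ᵥ G.mulVec pstar
      ≤ 2 * ((2 * lam) * d p0) := by
    rw [← hexp]
    calc (p0 - pstar) ⬝ᵥ G.mulVec (p0 - pstar) ≤ lam * N (p0 - pstar) ^ 2 := hq
    _ ≤ 2 * lam * N (p0 - pstar) ^ 2 := by nlinarith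
    _ ≤ 2 * ((2 * lam) * d p0) := by nlinarith
  linarith
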